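/- For any real m×p matrix X and real p×n matrix Y, the nuclear norm of their product is bounded by the product of their Frobenius norms: ‖X Y‖* ≤ ‖X‖_F · ‖Y‖_F. -/

import Mathlib

open Matrix Finset


/-- Cauchy–Schwarz for dot products. -/
lemma dot_cs {κ : Type*} [Fintype κ] (a b : κ → ℝ) :
    a ⬝ᵥ b ≤ Real.sqrt (a ⬝ᵥ a) * Real.sqrt (b ⬝ᵥ b) := by
  simpa [dotProduct, pow_two] using Real.sum_mul_le_sqrt_mul_sqrt Finset.univ a b

lemma dot_mulVec_mulVec {ι κ : Type*} [Fintype ι] [Fintype κ] (M : Matrix ι κ ℝ)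
    (x y : κ → ℝ) : (M *ᵥ x) ⬝ᵥ (M *ᵥ y) = x ⬝ᵥ ((Mᵀ * M) *ᵥ y) := by
  rw [← Matrix.mulVec_mulVec, Matrix.dotProduct_mulVec x, Matrix.vecMul_transpose]

lemma dot_self_nonneg {κ : Type*} [Fintype κ] (a : κ → ℝ) : 0 ≤ a ⬝ᵥ a :=
  Finset.sum_nonneg fun i _ => mul_self_nonneg _


lemma sum_mul_sum_swap {ι κ : Type*} [Fintype ι] [Fintype κ] (f : κ → ℝ) (g : ι → κ → ℝ) :
    ∑ k, f k * ∑ i, g i k = ∑ i, ∑ k, f k * g i k := by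
  simp_rw [Finset.mul_sum]; exact Finset.sum_comm

/-- Bessel's inequality for an "orthogonal, norms ≤ 1" family, in dot-product form. -/
lemma bessel {ι κ : Type*} [Fintype ι] [Fintype κ] [DecidableEq ι] (u : ι → κ → ℝ)
    (horth : ∀ i j, i ≠ j → u i ⬝ᵥ u j = 0) (hnorm : ∀ i, u i ⬝ᵥ u i ≤ 1) (w : κ → ℝ) :
    ∑ i, (u i ⬝ᵥ w) ^ 2 ≤ w ⬝ᵥ w := by
  set c : ι → ℝ := fun i => u i ⬝ᵥ w with hc
  set s : κ → ℝ := fun k => ∑ i, c i * u i k with hs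
  have h0 : 0 ≤ (fun k => w k - s k) ⬝ᵥ (fun k => w k - s k) :=
    dot_self_nonneg _
  have pair : ∀ (a : κ → ℝ) i, ∑ k, a k * (c i * u i k) = c i * (u i ⬝ᵥ a) := by
    intro a i
    simp only [dotProduct, Finset.mul_sum]
    exact Finset.sum_congr rfl fun k _ => by ring
  have h1 : ∑ k, w k * s k = ∑ i, c i ^ 2 := by
    rw [hs, sum_mul_sum_swap]
    refine Finset.sum_congr rfl fun i _ => ?_
    rw [pair w i]
    simp only [hc, pow_two]
  have hdots : ∀ i, u i ⬝ᵥ s = c i * (u i ⬝ᵥ u i) := by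
    intro i
    simp only [dotProduct, hs]
    rw [sum_mul_sum_swap (fun k => u i k) (fun j k => c j * u j k)]
    rw [Finset.sum_eq_single i]
    · rw [pair (u i) i]; rfl
    · intro j _ hji
      rw [pair (u i) j, horth j i hji, mul_zero]
    · intro h; exact absurd (Finset.mem_univ i) h
  have h2 : ∑ k, s k * s k = ∑ i, c i ^ 2 * (u i ⬝ᵥ u i) := by
    conv_lhs => rw [hs]
    rw [sum_mul_sum_swap s (fun i k => c i * u i k)]
    refine Finset.sum_congr rfl fun i _ => ?_
    rw [pair s i, hdots i]
    ring
  have hexp : (fun k => w k - s k) ⬝ᵥ (fun k => w k - s k)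
      = w ⬝ᵥ w - 2 * ∑ k, w k * s k + ∑ k, s k * s k := by
    have e1 : ∀ k, (w k - s k) * (w k - s k)
        = w k * w k - 2 * (w k * s k) + s k * s k := fun k => by ring
    simp only [dotProduct, e1]
    rw [Finset.sum_add_distrib, Finset.sum_sub_distrib, ← Finset.mul_sum]
  have h3 : ∑ i, c i ^ 2 * (u i ⬝ᵥ u i) ≤ ∑ i, c i ^ 2 := by
    refine Finset.sum_le_sum fun i _ => ?_
    calc c i ^ 2 * (u i ⬝ᵥ u i) ≤ c i ^ 2 * 1 :=
          mul_le_mul_of_nonneg_left (hnorm i) (sq_nonneg _)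
      _ = c i ^ 2 := mul_one _
  rw [hexp, h1, h2] at h0
  linarith

/-- Parseval for a square orthonormal family, in dot-product form. -/
lemma parseval {ι : Type*} [Fintype ι] [DecidableEq ι] (v : ι → ι → ℝ)
    (horth : ∀ i j, v i ⬝ᵥ v j = if i = j then 1 else 0) (w : ι → ℝ) :
    ∑ i, (v i ⬝ᵥ w) ^ 2 = w ⬝ᵥ w := by
  set V : Matrix ι ι ℝ := Matrix.of v with hVdef
  have hV : V * Vᵀ = 1 := by
    ext i j
    simpa [Matrix.mul_apply, hVdef, Matrix.one_apply, dotProduct] using horth i j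
  have hVt : Vᵀ * V = 1 := mul_eq_one_comm.mp hV
  have h1 : ∑ i, (v i ⬝ᵥ w) ^ 2 = (V *ᵥ w) ⬝ᵥ (V *ᵥ w) := by
    simp [dotProduct, Matrix.mulVec, pow_two, hVdef]
  rw [h1, dot_mulVec_mulVec, hVt, Matrix.one_mulVec]


theorem nuclearNorm_mul_le' (m p n : ℕ)
    (X : Matrix (Fin m) (Fin p) ℝ) (Y : Matrix (Fin p) (Fin n) ℝ)
    :
    (∑ i, Real.sqrt ((Matrix.isHermitian_conjTranspose_mul_self (X * Y)).eigenvalues i)) ≤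
      Real.sqrt (∑ i, ∑ j, (X i j) ^ 2) * Real.sqrt (∑ i, ∑ j, (Y i j) ^ 2) := by
  classical
  set M : Matrix (Fin m) (Fin n) ℝ := X * Y with hMdef
  set lam : Fin n → ℝ := (Matrix.isHermitian_conjTranspose_mul_self M).eigenvalues with hlamdef
  have hlam : ∀ i, 0 ≤ lam i := Matrix.eigenvalues_conjTranspose_mul_self_nonneg M
  set v : Fin n → Fin n → ℝ :=
    fun i => ⇑((Matrix.isHermitian_conjTranspose_mul_self M).eigenvectorBasis i) with hvdef
  have horth : ∀ i j, v i ⬝ᵥ v j = if i = j then 1 else 0 := by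
    intro i j
    have := orthonormal_iff_ite.mp
      (Matrix.isHermitian_conjTranspose_mul_self M).eigenvectorBasis.orthonormal (i := i) (j := j)
    simp [EuclideanSpace.inner_eq_star_dotProduct] at this
    rw [dotProduct_comm]; exact this
  have heig : ∀ i, (Mᵀ * M) *ᵥ v i = lam i • v i := by
    intro i
    have := (Matrix.isHermitian_conjTranspose_mul_self M).mulVec_eigenvectorBasis i
    simp at this; exact this
  have hMv : ∀ i j, (M *ᵥ v i) ⬝ᵥ (M *ᵥ v j) = if i = j then lam i else 0 := by
    intro i j
    rw [dot_mulVec_mulVec, heig j, dotProduct_smul, smul_eq_mul, horth i j]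
    by_cases h : i = j
    · subst h; simp
    · simp [h]
  set sig : Fin n → ℝ := fun i => Real.sqrt (lam i) with hsigdef
  set u : Fin n → Fin m → ℝ := fun i => (sig i)⁻¹ • (M *ᵥ v i) with hudef
  have huu : ∀ i j, u i ⬝ᵥ u j = if i = j then (if lam i = 0 then 0 else 1) else 0 := by
    intro i j
    rw [hudef]
    simp only [smul_dotProduct, dotProduct_smul, smul_eq_mul]
    rw [hMv i j]
    by_cases h : i = j
    · subst h
      by_cases h0 : lam i = 0
      · simp [h0]
      · have hs : sig i * sig i = lam i := Real.mul_self_sqrt (hlam i)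
        have hsne : sig i ≠ 0 := by
          intro hz
          rw [hz, mul_zero] at hs
          exact h0 hs.symm
        simp only [if_pos rfl, if_neg h0]
        field_simp
        simp only [↓reduceIte]
        linarith [hs]
    · simp [h]
  have hsig_eq : ∀ i, sig i = (Xᵀ *ᵥ u i) ⬝ᵥ (Y *ᵥ v i) := by
    intro i
    have h1 : (Xᵀ *ᵥ u i) ⬝ᵥ (Y *ᵥ v i) = u i ⬝ᵥ (M *ᵥ v i) := by
      rw [Matrix.mulVec_transpose, ← Matrix.dotProduct_mulVec, Matrix.mulVec_mulVec, ← hMdef]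
    rw [h1, hudef]
    simp only [smul_dotProduct, smul_eq_mul]
    rw [show (M *ᵥ v i) ⬝ᵥ (M *ᵥ v i) = lam i by simpa using hMv i i]
    by_cases h0 : lam i = 0
    · simp [hsigdef, h0]
    · have hs : sig i * sig i = lam i := Real.mul_self_sqrt (hlam i)
      have hsne : sig i ≠ 0 := by
        intro hz; rw [hz, mul_zero] at hs; exact h0 hs.symm
      field_simp
      linarith [hs]
  -- the two Frobenius-type bounds
  have hY : ∑ i, (Y *ᵥ v i) ⬝ᵥ (Y *ᵥ v i) = ∑ k, ∑ j, (Y k j) ^ 2 := by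
    have h1 : ∀ i, (Y *ᵥ v i) ⬝ᵥ (Y *ᵥ v i) = ∑ k, (v i ⬝ᵥ Y k) ^ 2 := by
      intro i
      simp only [dotProduct, Matrix.mulVec, pow_two]
      exact Finset.sum_congr rfl fun k _ =>
        congrArg₂ (· * ·) (Finset.sum_congr rfl fun j _ => mul_comm _ _)
          (Finset.sum_congr rfl fun j _ => mul_comm _ _)
    simp only [h1]
    rw [Finset.sum_comm]
    refine Finset.sum_congr rfl fun k _ => ?_
    rw [parseval v horth (Y k)]
    simp [dotProduct, pow_two]
  have hX : ∑ i, (Xᵀ *ᵥ u i) ⬝ᵥ (Xᵀ *ᵥ u i) ≤ ∑ j, ∑ k, (X j k) ^ 2 := by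
    have h1 : ∀ i, (Xᵀ *ᵥ u i) ⬝ᵥ (Xᵀ *ᵥ u i) = ∑ k, (u i ⬝ᵥ fun j => X j k) ^ 2 := by
      intro i
      simp only [dotProduct, Matrix.mulVec, Matrix.transpose_apply, pow_two]
      exact Finset.sum_congr rfl fun k _ =>
        congrArg₂ (· * ·) (Finset.sum_congr rfl fun j _ => mul_comm _ _)
          (Finset.sum_congr rfl fun j _ => mul_comm _ _)
    simp only [h1]
    rw [Finset.sum_comm]
    have horthu : ∀ i j, i ≠ j → u i ⬝ᵥ u j = 0 := by
      intro i j hij; rw [huu i j, if_neg hij]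
    have hnormu : ∀ i, u i ⬝ᵥ u i ≤ 1 := by
      intro i; rw [huu i i, if_pos rfl]; split <;> norm_num
    calc ∑ k, ∑ i, (u i ⬝ᵥ fun j => X j k) ^ 2
        ≤ ∑ k, (fun j => X j k) ⬝ᵥ (fun j => X j k) :=
          Finset.sum_le_sum fun k _ => bessel u horthu hnormu _
      _ = ∑ j, ∑ k, (X j k) ^ 2 := by
          rw [Finset.sum_comm]
          exact Finset.sum_congr rfl fun k _ => Finset.sum_congr rfl fun j _ => (pow_two _).symm
  -- put it together
  calc ∑ i, Real.sqrt (lam i) = ∑ i, sig i := rfl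
    _ = ∑ i, (Xᵀ *ᵥ u i) ⬝ᵥ (Y *ᵥ v i) := Finset.sum_congr rfl fun i _ => hsig_eq i
    _ ≤ ∑ i, Real.sqrt ((Xᵀ *ᵥ u i) ⬝ᵥ (Xᵀ *ᵥ u i)) * Real.sqrt ((Y *ᵥ v i) ⬝ᵥ (Y *ᵥ v i)) :=
        Finset.sum_le_sum fun i _ => dot_cs _ _
    _ ≤ Real.sqrt (∑ i, (Xᵀ *ᵥ u i) ⬝ᵥ (Xᵀ *ᵥ u i)) *
        Real.sqrt (∑ i, (Y *ᵥ v i) ⬝ᵥ (Y *ᵥ v i)) :=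
        Real.sum_sqrt_mul_sqrt_le _ (fun i => dot_self_nonneg _) (fun i => dot_self_nonneg _)
    _ ≤ Real.sqrt (∑ i, ∑ j, (X i j) ^ 2) * Real.sqrt (∑ i, ∑ j, (Y i j) ^ 2) := by
        rw [hY]
        exact mul_le_mul_of_nonneg_right (Real.sqrt_le_sqrt hX) (Real.sqrt_nonneg _)


/-- The nuclear norm of a real matrix: the sum of its singular values. -/
noncomputable def nuclearNorm {α β : Type*} [Fintype α] [Fintype β] [DecidableEq β]
    (M : Matrix α β ℝ) : ℝ :=
  ∑ i, Real.sqrt ((Matrix.isHermitian_conjTranspose_mul_self M).eigenvalues i)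

/-- The Frobenius norm of a real matrix. -/
noncomputable def frobeniusNorm {α β : Type*} [Fintype α] [Fintype β] (M : Matrix α β ℝ) : ℝ :=
  Real.sqrt (∑ i, ∑ j, (M i j) ^ 2)

/-- The nuclear norm of a product is at most the product of the Frobenius norms. -/
theorem nuclearNorm_mul_le (m p n : ℕ)
    (X : Matrix (Fin m) (Fin p) ℝ) (Y : Matrix (Fin p) (Fin n) ℝ) :
    nuclearNorm (X * Y) ≤ frobeniusNorm X * frobeniusNorm Y := by
  unfold nuclearNorm frobeniusNorm
  exact nuclearNorm_mul_le' m p n X Y
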